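/- Let q, l, k, p, n be even positive integers with q < l < k < p < n, k − l − q < 0 and n−p+k−q < p−l. Let the group G = (ℤ/2)³ act on R₃ × S¹ × S¹ × S¹ as follows: the first generator sends (u, z_1, z_2, z_3) to (ε_l(u), −z_1, z_2, z_3), where ε_l negates the coordinates u_1,…,u_l and u_{p+1},…,u_n; the second generator sends (u, z_1, z_2, z_3) to (ε_k(u), z_1, −z_2, z_3), where ε_k negates the coordinates u_1,…,u_q and u_{l+1},…,u_k; the third generator sends (u, z_1, z_2, z_3) to (ε_p(u), z_1, z_2, −z_3), where ε_p negates the coordinates u_1,…,u_q and u_{k+1},…,u_p. Then the orbit space (R₃ × S¹ × S¹ × S¹)/G is homeomorphic to S^{n−p+k−q−1} × S^{p−k−1} × S^{q−1} × S¹ × S¹ × S¹. -/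

import Mathlib

open Metric

/-- The intersection of three quadrics in ℝⁿ associated to a product of three simplices:
`(u₁²+⋯+u_q²) + (u_{q+1}²+⋯+u_l²) + (u_{p+1}²+⋯+u_n²) = n-p+l`,
`-(u₁²+⋯+u_q²) + (u_{l+1}²+⋯+u_k²) = k-l-q`,
`(u₁²+⋯+u_q²) + (u_{k+1}²+⋯+u_p²) = p-k+q`. -/
def quadR3 (q l k p n : ℕ) : Set (EuclideanSpace ℝ (Fin n)) :=
  {u | (∑ j : Fin n, if (j : ℕ) < l ∨ p ≤ (j : ℕ) then u j ^ 2 else 0) = (n : ℝ) - p + l ∧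
       (∑ j : Fin n, if (j : ℕ) < q then -(u j ^ 2)
          else if l ≤ (j : ℕ) ∧ (j : ℕ) < k then u j ^ 2 else 0) = (k : ℝ) - l - q ∧
       (∑ j : Fin n, if (j : ℕ) < q ∨ (k ≤ (j : ℕ) ∧ (j : ℕ) < p) then u j ^ 2 else 0)
          = (p : ℝ) - k + q}

/-- The total space `R₃ × S¹ × S¹ × S¹`, with `S¹ ⊂ ℂ` the unit circle. -/
abbrev totalSpace5 (q l k p n : ℕ) : Type :=
  {x : EuclideanSpace ℝ (Fin n) × ℂ × ℂ × ℂ //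
    x.1 ∈ quadR3 q l k p n ∧ x.2.1 ∈ sphere (0 : ℂ) 1 ∧
    x.2.2.1 ∈ sphere (0 : ℂ) 1 ∧ x.2.2.2 ∈ sphere (0 : ℂ) 1}

/-- First generator of `(ℤ/2)³`: `(u, z₁, z₂, z₃) ↦ (ε_l u, -z₁, z₂, z₃)`,
where `ε_l` negates the coordinates `u₁, …, u_l` and `u_{p+1}, …, u_n`. -/
def gen5₁ (q l k p n : ℕ) :
    EuclideanSpace ℝ (Fin n) × ℂ × ℂ × ℂ → EuclideanSpace ℝ (Fin n) × ℂ × ℂ × ℂ :=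
  fun x => (WithLp.toLp 2 (fun (j : Fin n) => if (j : ℕ) < l ∨ p ≤ (j : ℕ) then -x.1 j else x.1 j),
    -x.2.1, x.2.2.1, x.2.2.2)

/-- Second generator of `(ℤ/2)³`: `(u, z₁, z₂, z₃) ↦ (ε_k u, z₁, -z₂, z₃)`,
where `ε_k` negates the coordinates `u₁, …, u_q` and `u_{l+1}, …, u_k`. -/
def gen5₂ (q l k p n : ℕ) :
    EuclideanSpace ℝ (Fin n) × ℂ × ℂ × ℂ → EuclideanSpace ℝ (Fin n) × ℂ × ℂ × ℂ :=
  fun x => (WithLp.toLp 2 (fun (j : Fin n) => if (j : ℕ) < q ∨ (l ≤ (j : ℕ) ∧ (j : ℕ) < k) then -x.1 j else x.1 j),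
    x.2.1, -x.2.2.1, x.2.2.2)

/-- Third generator of `(ℤ/2)³`: `(u, z₁, z₂, z₃) ↦ (ε_p u, z₁, z₂, -z₃)`,
where `ε_p` negates the coordinates `u₁, …, u_q` and `u_{k+1}, …, u_p`. -/
def gen5₃ (q l k p n : ℕ) :
    EuclideanSpace ℝ (Fin n) × ℂ × ℂ × ℂ → EuclideanSpace ℝ (Fin n) × ℂ × ℂ × ℂ :=
  fun x => (WithLp.toLp 2 (fun (j : Fin n) => if (j : ℕ) < q ∨ (k ≤ (j : ℕ) ∧ (j : ℕ) < p) then -x.1 j else x.1 j),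
    x.2.1, x.2.2.1, -x.2.2.2)

/-- The orbit relation of the `(ℤ/2)³`-action generated by `gen5₁`, `gen5₂`, `gen5₃`. -/
def orbitRel5 (q l k p n : ℕ) : totalSpace5 q l k p n → totalSpace5 q l k p n → Prop :=
  fun a b => ∃ s₁ s₂ s₃ : Bool,
    b.val = (cond s₁ (gen5₁ q l k p n) id)
      ((cond s₂ (gen5₂ q l k p n) id) ((cond s₃ (gen5₃ q l k p n) id) a.val))


noncomputable section
namespace MX
open Finset

/-- extend a Euclidean vector to `ℕ → ℝ` by zero -/
def ext (n : ℕ) (u : EuclideanSpace ℝ (Fin n)) : ℕ → ℝ :=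
  fun m => if h : m < n then u ⟨m, h⟩ else 0

/-- pairwise complex rotation of a real sequence -/
def rotC (ζ : ℕ → ℂ) (f : ℕ → ℝ) : ℕ → ℝ := fun m =>
  if Even m then (ζ m).re * f m - (ζ m).im * f (m + 1)
  else (ζ m).im * f (m - 1) + (ζ m).re * f m

def PairConst (ζ : ℕ → ℂ) : Prop := ∀ m, Even m → ζ (m + 1) = ζ m

lemma rotC_rotC (ζ ζ' : ℕ → ℂ) (f : ℕ → ℝ) (h' : PairConst ζ') :
    rotC ζ (rotC ζ' f) = rotC (fun m => ζ m * ζ' m) f := by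
  funext m
  rcases Nat.even_or_odd m with he | ho
  · have h1 : ¬ Even (m + 1) := by simp [Nat.even_add_one, he]
    have hz := h' m he
    simp only [rotC, if_pos he, if_neg h1, hz, Nat.add_sub_cancel, Complex.mul_re,
      Complex.mul_im]
    ring
  · obtain ⟨t, rfl⟩ := ho
    have h1 : ¬ Even (2 * t + 1) := by simp [Nat.even_add_one]
    have h2 : Even (2 * t) := ⟨t, by ring⟩
    have hz := h' (2 * t) h2
    simp only [rotC, if_pos h2, if_neg h1, Nat.add_sub_cancel, hz, Complex.mul_re,
      Complex.mul_im]
    ring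

lemma rotC_real (ζ : ℕ → ℂ) (f : ℕ → ℝ) (h : ∀ m, (ζ m).im = 0) (m : ℕ) :
    rotC ζ f m = (ζ m).re * f m := by
  rcases Nat.even_or_odd m with he | ho
  · simp [rotC, if_pos he, h]
  · have h1 : ¬ Even m := Nat.not_even_iff_odd.mpr ho
    simp [rotC, if_neg h1, h]

lemma rotC_one (f : ℕ → ℝ) : rotC (fun _ => 1) f = f := by
  funext m
  rcases Nat.even_or_odd m with he | ho
  · simp [rotC, if_pos he]
  · have h1 : ¬ Even m := Nat.not_even_iff_odd.mpr ho
    simp [rotC, if_neg h1]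

lemma rotC_star (ζ : ℕ → ℂ) (f : ℕ → ℝ) (hu : ∀ m, Complex.normSq (ζ m) = 1)
    (hp : PairConst ζ) : rotC (fun m => starRingEnd ℂ (ζ m)) (rotC ζ f) = f := by
  rw [rotC_rotC _ _ _ hp]
  have : (fun m => starRingEnd ℂ (ζ m) * ζ m) = fun _ => 1 := by
    funext m
    rw [mul_comm, Complex.mul_conj, hu m, Complex.ofReal_one]
  rw [this, rotC_one]

def Sblk (s e : ℕ) (f : ℕ → ℝ) : ℝ := ∑ m ∈ Ico s e, f m ^ 2

lemma Sblk_nonneg (s e : ℕ) (f : ℕ → ℝ) : 0 ≤ Sblk s e f :=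
  Finset.sum_nonneg fun _ _ => sq_nonneg _

lemma Sblk_rotC_aux (ζ : ℕ → ℂ) (f : ℕ → ℝ) (hu : ∀ m, Complex.normSq (ζ m) = 1)
    (hp : PairConst ζ) (a : ℕ) :
    ∀ b : ℕ, ∑ m ∈ Ico (2 * a) (2 * b), (rotC ζ f m) ^ 2 = ∑ m ∈ Ico (2 * a) (2 * b), f m ^ 2 := by
  intro b
  induction b with
  | zero => simp
  | succ b ih =>
    rcases le_or_gt (b + 1) a with hba | hba
    · rw [Ico_eq_empty (show ¬ (2*a < 2*(b+1)) by omega)]; simp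
    · have hab : a ≤ b := by omega
      have h1 : 2 * a ≤ 2 * b := by omega
      have h2 : 2 * a ≤ 2 * b + 1 := by omega
      rw [show 2 * (b + 1) = (2 * b + 1) + 1 by ring,
        Finset.sum_Ico_succ_top h2, Finset.sum_Ico_succ_top h1,
        Finset.sum_Ico_succ_top h2, Finset.sum_Ico_succ_top h1, ih]
      have he : Even (2 * b) := ⟨b, by ring⟩
      have ho : ¬ Even (2 * b + 1) := by simp [Nat.even_add_one]
      have hz := hp (2 * b) he
      have hn := hu (2 * b)
      rw [Complex.normSq_apply] at hn
      simp only [rotC, if_pos he, if_neg ho, hz, Nat.add_sub_cancel]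
      linear_combination (f (2*b)^2 + f (2*b+1)^2) * hn

lemma Sblk_rotC (ζ : ℕ → ℂ) (f : ℕ → ℝ) (hu : ∀ m, Complex.normSq (ζ m) = 1)
    (hp : PairConst ζ) {s e : ℕ} (hs : Even s) (he : Even e) :
    Sblk s e (rotC ζ f) = Sblk s e f := by
  obtain ⟨a, ha⟩ := hs
  obtain ⟨b, hb⟩ := he
  rw [Sblk, Sblk, show s = 2 * a by omega, show e = 2 * b by omega]
  exact Sblk_rotC_aux ζ f hu hp a b

lemma Sblk_split (f : ℕ → ℝ) {s t e : ℕ} (h1 : s ≤ t) (h2 : t ≤ e) :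
    Sblk s e f = Sblk s t f + Sblk t e f := (Finset.sum_Ico_consecutive _ h1 h2).symm

lemma rotC_zero_high (ζ : ℕ → ℂ) (f : ℕ → ℝ) {e : ℕ} (he : Even e)
    (hf : ∀ m, e ≤ m → f m = 0) {m : ℕ} (hm : e ≤ m) : rotC ζ f m = 0 := by
  rcases Nat.even_or_odd m with hme | hmo
  · rw [rotC, if_pos hme, hf m hm, hf (m+1) (by omega)]; ring
  · have h1 : ¬ Even m := Nat.not_even_iff_odd.mpr hmo
    obtain ⟨a, ha⟩ := he; obtain ⟨t, ht⟩ := hmo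
    rw [rotC, if_neg h1, hf m hm, hf (m-1) (by omega)]; ring

lemma ext_fin (n : ℕ) (u : EuclideanSpace ℝ (Fin n)) (j : Fin n) : ext n u (j : ℕ) = u j := by
  simp [ext, j.isLt]
variable {q l k p n : ℕ}

lemma quad_mem (hql : q ≤ l) (hlk : l ≤ k) (hkp : k ≤ p) (hpn : p ≤ n)
    (u : EuclideanSpace ℝ (Fin n)) :
    u ∈ quadR3 q l k p n ↔
      (Sblk 0 l (ext n u) + Sblk p n (ext n u) = (n : ℝ) - p + l ∧
       -Sblk 0 q (ext n u) + Sblk l k (ext n u) = (k : ℝ) - l - q ∧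
       Sblk 0 q (ext n u) + Sblk k p (ext n u) = (p : ℝ) - k + q) := by
  have key : ∀ g : ℕ → ℝ, (∑ j : Fin n, g (j : ℕ)) = ∑ m ∈ Ico 0 n, g m := by
    intro g; rw [Fin.sum_univ_eq_sum_range, range_eq_Ico]
  have h1 : (∑ j : Fin n, if (j : ℕ) < l ∨ p ≤ (j : ℕ) then u j ^ 2 else 0)
      = Sblk 0 l (ext n u) + Sblk p n (ext n u) := by
    have e1 : ∀ j : Fin n, (if (j : ℕ) < l ∨ p ≤ (j : ℕ) then u j ^ 2 else 0)
        = (fun m => if m < l ∨ p ≤ m then (ext n u m) ^ 2 else 0) (j : ℕ) := by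
      intro j; simp only [ext_fin]
    rw [Finset.sum_congr rfl (fun j _ => e1 j),
      key (fun m => if m < l ∨ p ≤ m then (ext n u m) ^ 2 else 0),
      ← Finset.sum_Ico_consecutive _ (Nat.zero_le l) (le_trans hlk (le_trans hkp hpn)),
      ← Finset.sum_Ico_consecutive _ (le_trans hlk hkp) hpn]
    have p1 : ∑ m ∈ Ico 0 l, (if m < l ∨ p ≤ m then (ext n u m) ^ 2 else 0)
        = Sblk 0 l (ext n u) :=
      Finset.sum_congr rfl fun m hm => by rw [mem_Ico] at hm; rw [if_pos (by omega)]
    have p2 : ∑ m ∈ Ico l p, (if m < l ∨ p ≤ m then (ext n u m) ^ 2 else 0) = 0 := by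
      have pc : ∀ m ∈ Ico l p, (if m < l ∨ p ≤ m then (ext n u m) ^ 2 else 0) = (0:ℝ) := by
        intro m hm; rw [mem_Ico] at hm; rw [if_neg (by omega)]
      rw [Finset.sum_congr rfl pc]; simp
    have p3 : ∑ m ∈ Ico p n, (if m < l ∨ p ≤ m then (ext n u m) ^ 2 else 0)
        = Sblk p n (ext n u) :=
      Finset.sum_congr rfl fun m hm => by rw [mem_Ico] at hm; rw [if_pos (by omega)]
    rw [p1, p2, p3]; ring
  have h2 : (∑ j : Fin n, if (j : ℕ) < q then -(u j ^ 2)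
        else if l ≤ (j : ℕ) ∧ (j : ℕ) < k then u j ^ 2 else 0)
      = -Sblk 0 q (ext n u) + Sblk l k (ext n u) := by
    have e1 : ∀ j : Fin n, (if (j : ℕ) < q then -(u j ^ 2)
          else if l ≤ (j : ℕ) ∧ (j : ℕ) < k then u j ^ 2 else 0)
        = (fun m => if m < q then -((ext n u m) ^ 2)
            else if l ≤ m ∧ m < k then (ext n u m) ^ 2 else 0) (j : ℕ) := by
      intro j; simp only [ext_fin]
    rw [Finset.sum_congr rfl (fun j _ => e1 j),
      key (fun m => if m < q then -((ext n u m) ^ 2)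
        else if l ≤ m ∧ m < k then (ext n u m) ^ 2 else 0),
      ← Finset.sum_Ico_consecutive _ (Nat.zero_le q) (le_trans hql (le_trans hlk (le_trans hkp hpn))),
      ← Finset.sum_Ico_consecutive _ hql (le_trans hlk (le_trans hkp hpn)),
      ← Finset.sum_Ico_consecutive _ hlk (le_trans hkp hpn)]
    have p1 : ∑ m ∈ Ico 0 q, (if m < q then -((ext n u m) ^ 2)
          else if l ≤ m ∧ m < k then (ext n u m) ^ 2 else 0) = -Sblk 0 q (ext n u) := by
      have pc : ∀ m ∈ Ico 0 q, (if m < q then -((ext n u m) ^ 2)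
          else if l ≤ m ∧ m < k then (ext n u m) ^ 2 else 0) = -((ext n u m) ^ 2) := by
        intro m hm; rw [mem_Ico] at hm; rw [if_pos (by omega)]
      rw [Finset.sum_congr rfl pc, Sblk, ← Finset.sum_neg_distrib]
    have p2 : ∑ m ∈ Ico q l, (if m < q then -((ext n u m) ^ 2)
          else if l ≤ m ∧ m < k then (ext n u m) ^ 2 else 0) = 0 := by
      have pc : ∀ m ∈ Ico q l, (if m < q then -((ext n u m) ^ 2)
          else if l ≤ m ∧ m < k then (ext n u m) ^ 2 else 0) = (0:ℝ) := by
        intro m hm; rw [mem_Ico] at hm; rw [if_neg (by omega), if_neg (by omega)]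
      rw [Finset.sum_congr rfl pc]; simp
    have p3 : ∑ m ∈ Ico l k, (if m < q then -((ext n u m) ^ 2)
          else if l ≤ m ∧ m < k then (ext n u m) ^ 2 else 0) = Sblk l k (ext n u) :=
      Finset.sum_congr rfl fun m hm => by
        rw [mem_Ico] at hm; rw [if_neg (by omega), if_pos (by omega)]
    have p4 : ∑ m ∈ Ico k n, (if m < q then -((ext n u m) ^ 2)
          else if l ≤ m ∧ m < k then (ext n u m) ^ 2 else 0) = 0 := by
      have pc : ∀ m ∈ Ico k n, (if m < q then -((ext n u m) ^ 2)
          else if l ≤ m ∧ m < k then (ext n u m) ^ 2 else 0) = (0:ℝ) := by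
        intro m hm; rw [mem_Ico] at hm; rw [if_neg (by omega), if_neg (by omega)]
      rw [Finset.sum_congr rfl pc]; simp
    rw [p1, p2, p3, p4]; ring
  have h3 : (∑ j : Fin n, if (j : ℕ) < q ∨ (k ≤ (j : ℕ) ∧ (j : ℕ) < p) then u j ^ 2 else 0)
      = Sblk 0 q (ext n u) + Sblk k p (ext n u) := by
    have e1 : ∀ j : Fin n, (if (j : ℕ) < q ∨ (k ≤ (j : ℕ) ∧ (j : ℕ) < p) then u j ^ 2 else 0)
        = (fun m => if m < q ∨ (k ≤ m ∧ m < p) then (ext n u m) ^ 2 else 0) (j : ℕ) := by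
      intro j; simp only [ext_fin]
    rw [Finset.sum_congr rfl (fun j _ => e1 j),
      key (fun m => if m < q ∨ (k ≤ m ∧ m < p) then (ext n u m) ^ 2 else 0),
      ← Finset.sum_Ico_consecutive _ (Nat.zero_le q) (le_trans hql (le_trans hlk (le_trans hkp hpn))),
      ← Finset.sum_Ico_consecutive _ (le_trans hql hlk) (le_trans hkp hpn),
      ← Finset.sum_Ico_consecutive _ hkp hpn]
    have p1 : ∑ m ∈ Ico 0 q, (if m < q ∨ (k ≤ m ∧ m < p) then (ext n u m) ^ 2 else 0)
        = Sblk 0 q (ext n u) :=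
      Finset.sum_congr rfl fun m hm => by rw [mem_Ico] at hm; rw [if_pos (by omega)]
    have p2 : ∑ m ∈ Ico q k, (if m < q ∨ (k ≤ m ∧ m < p) then (ext n u m) ^ 2 else 0) = 0 := by
      have pc : ∀ m ∈ Ico q k, (if m < q ∨ (k ≤ m ∧ m < p) then (ext n u m) ^ 2 else 0) = (0:ℝ) := by
        intro m hm; rw [mem_Ico] at hm; rw [if_neg (by omega)]
      rw [Finset.sum_congr rfl pc]; simp
    have p3 : ∑ m ∈ Ico k p, (if m < q ∨ (k ≤ m ∧ m < p) then (ext n u m) ^ 2 else 0)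
        = Sblk k p (ext n u) :=
      Finset.sum_congr rfl fun m hm => by rw [mem_Ico] at hm; rw [if_pos (by omega)]
    have p4 : ∑ m ∈ Ico p n, (if m < q ∨ (k ≤ m ∧ m < p) then (ext n u m) ^ 2 else 0) = 0 := by
      have pc : ∀ m ∈ Ico p n, (if m < q ∨ (k ≤ m ∧ m < p) then (ext n u m) ^ 2 else 0) = (0:ℝ) := by
        intro m hm; rw [mem_Ico] at hm; rw [if_neg (by omega)]
      rw [Finset.sum_congr rfl pc]; simp
    rw [p1, p2, p3, p4]; ring
  rw [quadR3, Set.mem_setOf_eq, h1, h2, h3]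

lemma sum_emb (f : ℕ → ℝ) (h1 : q ≤ k) (h2 : p ≤ n) (h3 : k ≤ p) :
    ∑ j ∈ range (n - p + k - q), f (if j < k - q then q + j else p + j - (k - q))
      = ∑ m ∈ Ico q k, f m + ∑ m ∈ Ico p n, f m := by
  have hN : n - p + k - q = (k - q) + (n - p) := by omega
  rw [range_eq_Ico, ← Finset.sum_Ico_consecutive _ (Nat.zero_le (k - q)) (by omega)]
  have p1 : ∑ j ∈ Ico 0 (k - q), f (if j < k - q then q + j else p + j - (k - q))
      = ∑ m ∈ Ico q k, f m := by
    have pc : ∀ j ∈ Ico 0 (k - q), f (if j < k - q then q + j else p + j - (k - q))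
        = f (q + j) := by
      intro j hj; rw [mem_Ico] at hj; rw [if_pos (by omega)]
    rw [Finset.sum_congr rfl pc, Finset.sum_Ico_eq_sum_range (fun m => f m) q k, range_eq_Ico]
  have p2 : ∑ j ∈ Ico (k - q) (n - p + k - q), f (if j < k - q then q + j else p + j - (k - q))
      = ∑ m ∈ Ico p n, f m := by
    have pc : ∀ j ∈ Ico (k - q) (n - p + k - q), f (if j < k - q then q + j else p + j - (k - q))
        = f (p + j - (k - q)) := by
      intro j hj; rw [mem_Ico] at hj; rw [if_neg (by omega)]
    rw [Finset.sum_congr rfl pc,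
      Finset.sum_Ico_eq_sum_range (fun j => f (p + j - (k - q))) (k - q) (n - p + k - q),
      Finset.sum_Ico_eq_sum_range (fun m => f m) p n]
    have : n - p + k - q - (k - q) = n - p := by omega
    rw [this]
    exact Finset.sum_congr rfl fun i _ => by congr 1; omega
  rw [p1, p2]

lemma sum_shift (f : ℕ → ℝ) (s e : ℕ) :
    ∑ j ∈ range (e - s), f (s + j) = ∑ m ∈ Ico s e, f m :=
  (Finset.sum_Ico_eq_sum_range f s e).symm


def zet (q l k p : ℕ) (z₁ z₂ z₃ : ℂ) : ℕ → ℂ := fun m =>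
  if m < q then starRingEnd ℂ (z₁ * z₂ * z₃) else if m < l then starRingEnd ℂ z₁
  else if m < k then starRingEnd ℂ z₂ else if m < p then starRingEnd ℂ z₃
  else starRingEnd ℂ z₁

lemma zet_pairConst (hqe : Even q) (hle : Even l) (hke : Even k) (hpe : Even p)
    (z₁ z₂ z₃ : ℂ) : PairConst (zet q l k p z₁ z₂ z₃) := by
  obtain ⟨a, ha⟩ := hqe; obtain ⟨b, hb⟩ := hle; obtain ⟨c, hc⟩ := hke; obtain ⟨d, hd⟩ := hpe
  intro m hm; obtain ⟨t, ht⟩ := hm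
  simp only [zet]
  simp only [show (m + 1 < q) ↔ (m < q) by constructor <;> omega,
    show (m + 1 < l) ↔ (m < l) by constructor <;> omega,
    show (m + 1 < k) ↔ (m < k) by constructor <;> omega,
    show (m + 1 < p) ↔ (m < p) by constructor <;> omega]

lemma zet_normSq {z₁ z₂ z₃ : ℂ} (h1 : Complex.normSq z₁ = 1) (h2 : Complex.normSq z₂ = 1)
    (h3 : Complex.normSq z₃ = 1) (m : ℕ) : Complex.normSq (zet q l k p z₁ z₂ z₃ m) = 1 := by
  simp only [zet]
  split_ifs <;> simp [Complex.normSq_conj, Complex.normSq_mul, h1, h2, h3]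


def vm (q l k p n : ℕ) (x : EuclideanSpace ℝ (Fin n) × ℂ × ℂ × ℂ) : ℕ → ℝ :=
  rotC (zet q l k p x.2.1 x.2.2.1 x.2.2.2) (ext n x.1)

lemma vm_zero_high (hne : Even n) (x : EuclideanSpace ℝ (Fin n) × ℂ × ℂ × ℂ) {m : ℕ}
    (hm : n ≤ m) : vm q l k p n x m = 0 :=
  rotC_zero_high _ _ hne (fun m' hm' => by simp [ext, show ¬ (m' < n) by omega]) hm

lemma vm_eq_of (P : ℕ → Prop) [DecidablePred P]
    (x y : EuclideanSpace ℝ (Fin n) × ℂ × ℂ × ℂ)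
    (hext : ∀ m, ext n y.1 m = (if P m then (-1 : ℝ) else 1) * ext n x.1 m)
    (hzet : ∀ m, zet q l k p y.2.1 y.2.2.1 y.2.2.2 m * (if P m then (-1 : ℂ) else 1)
      = zet q l k p x.2.1 x.2.2.1 x.2.2.2 m)
    (hPpair : ∀ m, Even m → (P (m + 1) ↔ P m)) :
    vm q l k p n y = vm q l k p n x := by
  have hpc : PairConst (fun m => if P m then (-1 : ℂ) else 1) := by
    intro m hm
    simp only [hPpair m hm]
  have h1 : ext n y.1 = rotC (fun m => if P m then (-1 : ℂ) else 1) (ext n x.1) := by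
    funext m
    rw [rotC_real _ _ (fun m' => by split_ifs <;> simp) m, hext m]
    congr 1
    split_ifs <;> simp
  show rotC _ (ext n y.1) = _
  rw [h1, rotC_rotC _ _ _ hpc]
  have h2 : (fun m => zet q l k p y.2.1 y.2.2.1 y.2.2.2 m * if P m then (-1:ℂ) else 1)
      = zet q l k p x.2.1 x.2.2.1 x.2.2.2 := funext hzet
  rw [h2]
  rfl

lemma vm_gen₁ (hql : q ≤ l) (hlk : l ≤ k) (hkp : k ≤ p) (hle : Even l) (hpe : Even p)
    (x : EuclideanSpace ℝ (Fin n) × ℂ × ℂ × ℂ) :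
    vm q l k p n (gen5₁ q l k p n x) = vm q l k p n x := by
  apply vm_eq_of (fun m => m < l ∨ p ≤ m)
  · intro m
    by_cases h : m < n
    · simp only [ext, dif_pos h, gen5₁, PiLp.toLp_apply]
      split_ifs <;> ring
    · simp only [ext, dif_neg h]
      split_ifs <;> ring
  · intro m
    show zet q l k p (-x.2.1) x.2.2.1 x.2.2.2 m * _ = _
    simp only [zet]
    split_ifs <;> first | (exfalso; omega) | (simp [map_neg, map_mul]; try ring)
  · intro m hm
    obtain ⟨t, ht⟩ := hm; obtain ⟨b, hb⟩ := hle; obtain ⟨d, hd⟩ := hpe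
    constructor <;> omega

lemma vm_gen₂ (hql : q ≤ l) (hlk : l ≤ k) (hkp : k ≤ p) (hqe : Even q) (hle : Even l)
    (hke : Even k) (x : EuclideanSpace ℝ (Fin n) × ℂ × ℂ × ℂ) :
    vm q l k p n (gen5₂ q l k p n x) = vm q l k p n x := by
  apply vm_eq_of (fun m => m < q ∨ (l ≤ m ∧ m < k))
  · intro m
    by_cases h : m < n
    · simp only [ext, dif_pos h, gen5₂, PiLp.toLp_apply]
      split_ifs <;> ring
    · simp only [ext, dif_neg h]
      split_ifs <;> ring
  · intro m
    show zet q l k p x.2.1 (-x.2.2.1) x.2.2.2 m * _ = _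
    simp only [zet]
    split_ifs <;> first | (exfalso; omega) | (simp [map_neg, map_mul]; try ring)
  · intro m hm
    obtain ⟨t, ht⟩ := hm; obtain ⟨a, ha⟩ := hqe; obtain ⟨b, hb⟩ := hle; obtain ⟨c, hc⟩ := hke
    constructor <;> omega

lemma vm_gen₃ (hql : q ≤ l) (hlk : l ≤ k) (hkp : k ≤ p) (hqe : Even q) (hke : Even k)
    (hpe : Even p) (x : EuclideanSpace ℝ (Fin n) × ℂ × ℂ × ℂ) :
    vm q l k p n (gen5₃ q l k p n x) = vm q l k p n x := by
  apply vm_eq_of (fun m => m < q ∨ (k ≤ m ∧ m < p))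
  · intro m
    by_cases h : m < n
    · simp only [ext, dif_pos h, gen5₃, PiLp.toLp_apply]
      split_ifs <;> ring
    · simp only [ext, dif_neg h]
      split_ifs <;> ring
  · intro m
    show zet q l k p x.2.1 x.2.2.1 (-x.2.2.2) m * _ = _
    simp only [zet]
    split_ifs <;> first | (exfalso; omega) | (simp [map_neg, map_mul]; try ring)
  · intro m hm
    obtain ⟨t, ht⟩ := hm; obtain ⟨a, ha⟩ := hqe; obtain ⟨c, hc⟩ := hke; obtain ⟨d, hd⟩ := hpe
    constructor <;> omega

lemma Sblk_flip (P : ℕ → Prop) [DecidablePred P] (f g : ℕ → ℝ)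
    (h : ∀ m, g m = (if P m then (-1 : ℝ) else 1) * f m) (s e : ℕ) :
    Sblk s e g = Sblk s e f :=
  Finset.sum_congr rfl fun m _ => by rw [h m]; split_ifs <;> ring

lemma ext_gen₁ (x : EuclideanSpace ℝ (Fin n) × ℂ × ℂ × ℂ) (m : ℕ) :
    ext n (gen5₁ q l k p n x).1 m = (if m < l ∨ p ≤ m then (-1 : ℝ) else 1) * ext n x.1 m := by
  by_cases h : m < n
  · simp only [ext, dif_pos h, gen5₁, PiLp.toLp_apply]
    split_ifs <;> ring
  · simp only [ext, dif_neg h]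
    split_ifs <;> ring

lemma ext_gen₂ (x : EuclideanSpace ℝ (Fin n) × ℂ × ℂ × ℂ) (m : ℕ) :
    ext n (gen5₂ q l k p n x).1 m
      = (if m < q ∨ (l ≤ m ∧ m < k) then (-1 : ℝ) else 1) * ext n x.1 m := by
  by_cases h : m < n
  · simp only [ext, dif_pos h, gen5₂, PiLp.toLp_apply]
    split_ifs <;> ring
  · simp only [ext, dif_neg h]
    split_ifs <;> ring

lemma ext_gen₃ (x : EuclideanSpace ℝ (Fin n) × ℂ × ℂ × ℂ) (m : ℕ) :
    ext n (gen5₃ q l k p n x).1 m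
      = (if m < q ∨ (k ≤ m ∧ m < p) then (-1 : ℝ) else 1) * ext n x.1 m := by
  by_cases h : m < n
  · simp only [ext, dif_pos h, gen5₃, PiLp.toLp_apply]
    split_ifs <;> ring
  · simp only [ext, dif_neg h]
    split_ifs <;> ring

lemma normSq_of_mem {z : ℂ} (h : z ∈ Metric.sphere (0 : ℂ) 1) : Complex.normSq z = 1 := by
  rw [mem_sphere_zero_iff_norm] at h
  rw [Complex.normSq_eq_norm_sq, h]
  norm_num

lemma zsq_mem {z : ℂ} (h : z ∈ Metric.sphere (0 : ℂ) 1) : z ^ 2 ∈ Metric.sphere (0 : ℂ) 1 := by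
  rw [mem_sphere_zero_iff_norm] at *
  rw [norm_pow, h]
  norm_num

lemma mem_sphere_iff_Sblk {m : ℕ} (v : EuclideanSpace ℝ (Fin m)) :
    v ∈ Metric.sphere (0 : EuclideanSpace ℝ (Fin m)) 1 ↔ Sblk 0 m (ext m v) = 1 := by
  rw [mem_sphere_zero_iff_norm, EuclideanSpace.norm_eq]
  have hrw : ∑ i : Fin m, ‖v i‖ ^ 2 = Sblk 0 m (ext m v) := by
    rw [Sblk, ← range_eq_Ico, ← Fin.sum_univ_eq_sum_range (fun i => ext m v i ^ 2) m]
    exact Finset.sum_congr rfl fun j _ => by rw [ext_fin, Real.norm_eq_abs, sq_abs]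
  rw [hrw]
  constructor
  · intro h
    have h2 := congrArg (· ^ 2) h
    simpa [Real.sq_sqrt (Sblk_nonneg 0 m (ext m v))] using h2
  · intro h
    rw [h, Real.sqrt_one]

lemma facts (hql : q < l) (hlk : l < k) (hkp : k < p) (hpn : p < n) (hklq : k < l + q)
    (hineq : n + k + l < 2 * p + q) (x : EuclideanSpace ℝ (Fin n))
    (hx : x ∈ quadR3 q l k p n) :
    Sblk 0 q (ext n x) = Sblk l k (ext n x) + ((l : ℝ) + q - k) ∧
    Sblk k p (ext n x) = (p : ℝ) - l - Sblk l k (ext n x) ∧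
    Sblk q l (ext n x) + Sblk l k (ext n x) + Sblk p n (ext n x) = (n : ℝ) - p + k - q ∧
    0 < Sblk 0 q (ext n x) ∧ 0 < Sblk k p (ext n x) := by
  rw [quad_mem (le_of_lt hql) (le_of_lt hlk) (le_of_lt hkp) (le_of_lt hpn)] at hx
  obtain ⟨e1, e2, e3⟩ := hx
  rw [Sblk_split (ext n x) (Nat.zero_le q) (le_of_lt hql)] at e1
  have c1 : (q : ℝ) < l := by exact_mod_cast hql
  have c2 : (l : ℝ) < k := by exact_mod_cast hlk
  have c3 : (k : ℝ) < p := by exact_mod_cast hkp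
  have c4 : (p : ℝ) < n := by exact_mod_cast hpn
  have c5 : (k : ℝ) < l + q := by exact_mod_cast hklq
  have c6 : (n : ℝ) + k + l < 2 * p + q := by exact_mod_cast hineq
  have nB := Sblk_nonneg q l (ext n x)
  have nC := Sblk_nonneg l k (ext n x)
  have nE := Sblk_nonneg p n (ext n x)
  refine ⟨by linarith, by linarith, by linarith, by linarith, by linarith⟩

lemma Sblk_vm (hqe : Even q) (hle : Even l) (hke : Even k) (hpe : Even p) {s e : ℕ}
    (hs : Even s) (he : Even e) (x : EuclideanSpace ℝ (Fin n) × ℂ × ℂ × ℂ)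
    (h1 : x.2.1 ∈ Metric.sphere (0 : ℂ) 1) (h2 : x.2.2.1 ∈ Metric.sphere (0 : ℂ) 1)
    (h3 : x.2.2.2 ∈ Metric.sphere (0 : ℂ) 1) :
    Sblk s e (vm q l k p n x) = Sblk s e (ext n x.1) :=
  Sblk_rotC _ _ (zet_normSq (normSq_of_mem h1) (normSq_of_mem h2) (normSq_of_mem h3))
    (zet_pairConst hqe hle hke hpe _ _ _) hs he

def Wc (q l k p n : ℕ) (x : EuclideanSpace ℝ (Fin n) × ℂ × ℂ × ℂ) :
    EuclideanSpace ℝ (Fin (n - p + k - q)) :=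
  WithLp.toLp 2 fun j => (Real.sqrt ((n : ℝ) - p + k - q))⁻¹ *
    vm q l k p n x (if (j : ℕ) < k - q then q + (j : ℕ) else p + (j : ℕ) - (k - q))

def Ac (q l k p n : ℕ) (x : EuclideanSpace ℝ (Fin n) × ℂ × ℂ × ℂ) :
    EuclideanSpace ℝ (Fin q) :=
  WithLp.toLp 2 fun j => (Real.sqrt (Sblk 0 q (ext n x.1)))⁻¹ * vm q l k p n x (j : ℕ)

def Dc (q l k p n : ℕ) (x : EuclideanSpace ℝ (Fin n) × ℂ × ℂ × ℂ) :
    EuclideanSpace ℝ (Fin (p - k)) :=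
  WithLp.toLp 2 fun j => (Real.sqrt (Sblk k p (ext n x.1)))⁻¹ * vm q l k p n x (k + (j : ℕ))

lemma ext_of_fun {m : ℕ} (g : Fin m → ℝ) {i : ℕ} (h : i < m) :
    ext m (WithLp.toLp 2 g : EuclideanSpace ℝ (Fin m)) i = g ⟨i, h⟩ := by
  simp [ext, h]

lemma sum_sq_mul (c : ℝ) (g : ℕ → ℝ) (s : Finset ℕ) :
    ∑ m ∈ s, (c * g m) ^ 2 = c ^ 2 * ∑ m ∈ s, g m ^ 2 := by
  rw [Finset.mul_sum]
  exact Finset.sum_congr rfl fun m _ => by ring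

lemma Sblk_eq_range (e : ℕ) (f : ℕ → ℝ) : Sblk 0 e f = ∑ m ∈ range e, f m ^ 2 := by
  rw [Sblk, range_eq_Ico]

lemma Wc_mem (hql : q < l) (hlk : l < k) (hkp : k < p) (hpn : p < n) (hklq : k < l + q)
    (hineq : n + k + l < 2 * p + q) (hqe : Even q) (hle : Even l) (hke : Even k)
    (hpe : Even p) (hne : Even n) (x : EuclideanSpace ℝ (Fin n) × ℂ × ℂ × ℂ)
    (hx : x.1 ∈ quadR3 q l k p n) (h1 : x.2.1 ∈ Metric.sphere (0 : ℂ) 1)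
    (h2 : x.2.2.1 ∈ Metric.sphere (0 : ℂ) 1) (h3 : x.2.2.2 ∈ Metric.sphere (0 : ℂ) 1) :
    Wc q l k p n x ∈ Metric.sphere (0 : EuclideanSpace ℝ (Fin (n - p + k - q))) 1 := by
  obtain ⟨fA, fD, fBCE, hA, hD⟩ := facts hql hlk hkp hpn hklq hineq x.1 hx
  have c4 : (p : ℝ) < n := by exact_mod_cast hpn
  have c1 : (q : ℝ) < l := by exact_mod_cast hql
  have c2 : (l : ℝ) < k := by exact_mod_cast hlk
  have hcpos : (0 : ℝ) < (n : ℝ) - p + k - q := by linarith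
  rw [mem_sphere_iff_Sblk]
  have step1 : Sblk 0 (n - p + k - q) (ext (n - p + k - q) (Wc q l k p n x))
      = ∑ m ∈ range (n - p + k - q),
          ((Real.sqrt ((n : ℝ) - p + k - q))⁻¹ *
            vm q l k p n x (if m < k - q then q + m else p + m - (k - q))) ^ 2 := by
    rw [Sblk_eq_range]
    refine Finset.sum_congr rfl fun m hm => ?_
    rw [mem_range] at hm
    rw [ext_of_fun _ hm]
    rfl
  have step3 : ∑ m ∈ range (n - p + k - q),
        vm q l k p n x (if m < k - q then q + m else p + m - (k - q)) ^ 2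
      = Sblk q k (vm q l k p n x) + Sblk p n (vm q l k p n x) := by
    simpa [Sblk] using sum_emb (q := q) (k := k) (p := p) (n := n)
      (fun m' => vm q l k p n x m' ^ 2) (by omega) (by omega) (by omega)
  rw [step1, sum_sq_mul, step3, Sblk_vm hqe hle hke hpe hqe hke x h1 h2 h3,
    Sblk_vm hqe hle hke hpe hpe hne x h1 h2 h3,
    Sblk_split (ext n x.1) (le_of_lt hql) (le_of_lt hlk),
    inv_pow, Real.sq_sqrt (le_of_lt hcpos)]
  field_simp
  linarith

lemma Ac_mem (hql : q < l) (hlk : l < k) (hkp : k < p) (hpn : p < n) (hklq : k < l + q)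
    (hineq : n + k + l < 2 * p + q) (hqe : Even q) (hle : Even l) (hke : Even k)
    (hpe : Even p) (x : EuclideanSpace ℝ (Fin n) × ℂ × ℂ × ℂ)
    (hx : x.1 ∈ quadR3 q l k p n) (h1 : x.2.1 ∈ Metric.sphere (0 : ℂ) 1)
    (h2 : x.2.2.1 ∈ Metric.sphere (0 : ℂ) 1) (h3 : x.2.2.2 ∈ Metric.sphere (0 : ℂ) 1) :
    Ac q l k p n x ∈ Metric.sphere (0 : EuclideanSpace ℝ (Fin q)) 1 := by
  obtain ⟨fA, fD, fBCE, hA, hD⟩ := facts hql hlk hkp hpn hklq hineq x.1 hx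
  rw [mem_sphere_iff_Sblk]
  have step1 : Sblk 0 q (ext q (Ac q l k p n x))
      = ∑ m ∈ range q, ((Real.sqrt (Sblk 0 q (ext n x.1)))⁻¹ * vm q l k p n x m) ^ 2 := by
    rw [Sblk_eq_range]
    refine Finset.sum_congr rfl fun m hm => ?_
    rw [mem_range] at hm
    rw [ext_of_fun _ hm]
    rfl
  have step3 : ∑ m ∈ range q, vm q l k p n x m ^ 2 = Sblk 0 q (vm q l k p n x) :=
    (Sblk_eq_range q (vm q l k p n x)).symm
  rw [step1, sum_sq_mul, step3, Sblk_vm hqe hle hke hpe (Even.zero) hqe x h1 h2 h3,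
    inv_pow, Real.sq_sqrt (le_of_lt hA)]
  field_simp

lemma Dc_mem (hql : q < l) (hlk : l < k) (hkp : k < p) (hpn : p < n) (hklq : k < l + q)
    (hineq : n + k + l < 2 * p + q) (hqe : Even q) (hle : Even l) (hke : Even k)
    (hpe : Even p) (x : EuclideanSpace ℝ (Fin n) × ℂ × ℂ × ℂ)
    (hx : x.1 ∈ quadR3 q l k p n) (h1 : x.2.1 ∈ Metric.sphere (0 : ℂ) 1)
    (h2 : x.2.2.1 ∈ Metric.sphere (0 : ℂ) 1) (h3 : x.2.2.2 ∈ Metric.sphere (0 : ℂ) 1) :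
    Dc q l k p n x ∈ Metric.sphere (0 : EuclideanSpace ℝ (Fin (p - k))) 1 := by
  obtain ⟨fA, fD, fBCE, hA, hD⟩ := facts hql hlk hkp hpn hklq hineq x.1 hx
  rw [mem_sphere_iff_Sblk]
  have step1 : Sblk 0 (p - k) (ext (p - k) (Dc q l k p n x))
      = ∑ m ∈ range (p - k),
          ((Real.sqrt (Sblk k p (ext n x.1)))⁻¹ * vm q l k p n x (k + m)) ^ 2 := by
    rw [Sblk_eq_range]
    refine Finset.sum_congr rfl fun m hm => ?_
    rw [mem_range] at hm
    rw [ext_of_fun _ hm]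
    rfl
  have step3 : ∑ m ∈ range (p - k), vm q l k p n x (k + m) ^ 2 = Sblk k p (vm q l k p n x) := by
    simpa [Sblk] using sum_shift (fun m' => vm q l k p n x m' ^ 2) k p
  rw [step1, sum_sq_mul, step3, Sblk_vm hqe hle hke hpe hke hpe x h1 h2 h3,
    inv_pow, Real.sq_sqrt (le_of_lt hD)]
  field_simp

lemma sq_cases {z w : ℂ} (h : z ^ 2 = w ^ 2) : z = w ∨ z = -w := by
  have h2 : (z - w) * (z + w) = 0 := by linear_combination h
  rcases mul_eq_zero.mp h2 with h3 | h3
  · exact Or.inl (sub_eq_zero.mp h3)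
  · exact Or.inr (eq_neg_of_add_eq_zero_left h3)

lemma ne_zero_of_normSq {z : ℂ} (h : Complex.normSq z = 1) : z ≠ 0 := by
  intro h0
  rw [h0] at h
  simp at h

lemma conj_eq_inv {z : ℂ} (h : Complex.normSq z = 1) : starRingEnd ℂ z = z⁻¹ := by
  have h1 : z * starRingEnd ℂ z = 1 := by rw [Complex.mul_conj, h, Complex.ofReal_one]
  field_simp [ne_zero_of_normSq h] at h1 ⊢
  linear_combination h1

lemma build (hql : q ≤ l) (hlk : l ≤ k) (hkp : k ≤ p)
    (hqe : Even q) (hle : Even l) (hke : Even k) (hpe : Even p)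
    (a b : EuclideanSpace ℝ (Fin n) × ℂ × ℂ × ℂ) (ε₁ ε₂ ε₃ : ℝ) (s₁ s₂ s₃ : Bool)
    (he₁ : ε₁ = cond s₁ (-1 : ℝ) 1) (he₂ : ε₂ = cond s₂ (-1 : ℝ) 1)
    (he₃ : ε₃ = cond s₃ (-1 : ℝ) 1)
    (hz1 : b.2.1 = (ε₁ : ℂ) * a.2.1) (hz2 : b.2.2.1 = (ε₂ : ℂ) * a.2.2.1)
    (hz3 : b.2.2.2 = (ε₃ : ℂ) * a.2.2.2)
    (hn1 : Complex.normSq a.2.1 = 1) (hn2 : Complex.normSq a.2.2.1 = 1)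
    (hn3 : Complex.normSq a.2.2.2 = 1)
    (hvm : vm q l k p n b = vm q l k p n a) :
    b = (cond s₁ (gen5₁ q l k p n) id)
      ((cond s₂ (gen5₂ q l k p n) id) ((cond s₃ (gen5₃ q l k p n) id) a)) := by
  have hsq₁ : ε₁ * ε₁ = 1 := by cases s₁ <;> rw [he₁] <;> norm_num
  have hsq₂ : ε₂ * ε₂ = 1 := by cases s₂ <;> rw [he₂] <;> norm_num
  have hsq₃ : ε₃ * ε₃ = 1 := by cases s₃ <;> rw [he₃] <;> norm_num
  have hb1 : Complex.normSq b.2.1 = 1 := by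
    rw [hz1, Complex.normSq_mul, Complex.normSq_ofReal, hn1, hsq₁, one_mul]
  have hb2 : Complex.normSq b.2.2.1 = 1 := by
    rw [hz2, Complex.normSq_mul, Complex.normSq_ofReal, hn2, hsq₂, one_mul]
  have hb3 : Complex.normSq b.2.2.2 = 1 := by
    rw [hz3, Complex.normSq_mul, Complex.normSq_ofReal, hn3, hsq₃, one_mul]
  have ha1 : a.2.1 ≠ 0 := ne_zero_of_normSq hn1
  have ha2 : a.2.2.1 ≠ 0 := ne_zero_of_normSq hn2
  have ha3 : a.2.2.2 ≠ 0 := ne_zero_of_normSq hn3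
  have hm1 : a.2.1 * starRingEnd ℂ a.2.1 = 1 := by
    rw [Complex.mul_conj, hn1, Complex.ofReal_one]
  have hm2 : a.2.2.1 * starRingEnd ℂ a.2.2.1 = 1 := by
    rw [Complex.mul_conj, hn2, Complex.ofReal_one]
  have hm3 : a.2.2.2 * starRingEnd ℂ a.2.2.2 = 1 := by
    rw [Complex.mul_conj, hn3, Complex.ofReal_one]
  have hbe : ext n b.1
      = rotC (fun m => starRingEnd ℂ (zet q l k p b.2.1 b.2.2.1 b.2.2.2 m))
          (vm q l k p n b) :=
    (rotC_star _ _ (zet_normSq hb1 hb2 hb3) (zet_pairConst hqe hle hke hpe _ _ _)).symm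
  rw [hvm, show vm q l k p n a
      = rotC (zet q l k p a.2.1 a.2.2.1 a.2.2.2) (ext n a.1) from rfl,
    rotC_rotC _ _ _ (zet_pairConst hqe hle hke hpe _ _ _)] at hbe
  have hkey : (fun m => starRingEnd ℂ (zet q l k p b.2.1 b.2.2.1 b.2.2.2 m)
        * zet q l k p a.2.1 a.2.2.1 a.2.2.2 m)
      = fun m => (((if m < l ∨ p ≤ m then ε₁ else 1) *
          ((if m < q ∨ (l ≤ m ∧ m < k) then ε₂ else 1) *
           (if m < q ∨ (k ≤ m ∧ m < p) then ε₃ else 1)) : ℝ) : ℂ) := by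
    funext m
    rw [hz1, hz2, hz3]
    simp only [zet]
    split_ifs <;>
      first
        | (exfalso; omega)
        | (simp only [map_mul, Complex.conj_conj, Complex.conj_ofReal]
           push_cast
           first
             | linear_combination ((ε₁:ℂ) * ε₂ * ε₃ *
                   (a.2.2.1 * starRingEnd ℂ a.2.2.1 * (a.2.2.2 * starRingEnd ℂ a.2.2.2))) * hm1
                 + ((ε₁:ℂ) * ε₂ * ε₃ * (a.2.2.2 * starRingEnd ℂ a.2.2.2)) * hm2
                 + ((ε₁:ℂ) * ε₂ * ε₃) * hm3
             | linear_combination (ε₁:ℂ) * hm1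
             | linear_combination (ε₂:ℂ) * hm2
             | linear_combination (ε₃:ℂ) * hm3)
  rw [hkey] at hbe
  have hτ : ∀ m, ext n b.1 m
      = ((if m < l ∨ p ≤ m then ε₁ else 1) *
         ((if m < q ∨ (l ≤ m ∧ m < k) then ε₂ else 1) *
          (if m < q ∨ (k ≤ m ∧ m < p) then ε₃ else 1))) * ext n a.1 m := by
    intro m
    rw [hbe, rotC_real _ _ (fun m' => Complex.ofReal_im _) m, Complex.ofReal_re]
  have hu : b.1 = ((cond s₁ (gen5₁ q l k p n) id)
      ((cond s₂ (gen5₂ q l k p n) id) ((cond s₃ (gen5₃ q l k p n) id) a))).1 := by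
    refine PiLp.ext fun j => ?_
    have hbj : b.1 j = ((if (j : ℕ) < l ∨ p ≤ (j : ℕ) then ε₁ else 1) *
        ((if (j : ℕ) < q ∨ (l ≤ (j : ℕ) ∧ (j : ℕ) < k) then ε₂ else 1) *
         (if (j : ℕ) < q ∨ (k ≤ (j : ℕ) ∧ (j : ℕ) < p) then ε₃ else 1))) * a.1 j := by
      rw [← ext_fin n b.1 j, hτ (j : ℕ), ext_fin]
    rw [hbj]
    cases s₁ <;> cases s₂ <;> cases s₃ <;>
      simp only [cond_true, cond_false, id_eq, gen5₁, gen5₂, gen5₃, he₁, he₂, he₃, PiLp.toLp_apply] <;>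
      split_ifs <;> ring
  have hzz : b.2 = ((cond s₁ (gen5₁ q l k p n) id)
      ((cond s₂ (gen5₂ q l k p n) id) ((cond s₃ (gen5₃ q l k p n) id) a))).2 := by
    cases s₁ <;> cases s₂ <;> cases s₃ <;>
      simp only [cond_true, cond_false, id_eq, gen5₁, gen5₂, gen5₃, he₁, he₂, he₃] at hz1 hz2 hz3 ⊢ <;>
      refine Prod.ext ?_ (Prod.ext ?_ ?_) <;>
      simp [hz1, hz2, hz3]
  exact Prod.ext hu hzz

def Phi (q l k p n : ℕ) (hql : q < l) (hlk : l < k) (hkp : k < p) (hpn : p < n)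
    (hklq : k < l + q) (hineq : n + k + l < 2 * p + q) (hqe : Even q) (hle : Even l)
    (hke : Even k) (hpe : Even p) (hne : Even n) (x : totalSpace5 q l k p n) :
    Metric.sphere (0 : EuclideanSpace ℝ (Fin (n - p + k - q))) 1 ×
      Metric.sphere (0 : EuclideanSpace ℝ (Fin (p - k))) 1 ×
      Metric.sphere (0 : EuclideanSpace ℝ (Fin q)) 1 ×
      Metric.sphere (0 : ℂ) 1 × Metric.sphere (0 : ℂ) 1 × Metric.sphere (0 : ℂ) 1 :=
  (⟨Wc q l k p n x.val, Wc_mem hql hlk hkp hpn hklq hineq hqe hle hke hpe hne x.val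
      x.prop.1 x.prop.2.1 x.prop.2.2.1 x.prop.2.2.2⟩,
   ⟨Dc q l k p n x.val, Dc_mem hql hlk hkp hpn hklq hineq hqe hle hke hpe x.val
      x.prop.1 x.prop.2.1 x.prop.2.2.1 x.prop.2.2.2⟩,
   ⟨Ac q l k p n x.val, Ac_mem hql hlk hkp hpn hklq hineq hqe hle hke hpe x.val
      x.prop.1 x.prop.2.1 x.prop.2.2.1 x.prop.2.2.2⟩,
   ⟨x.val.2.1 ^ 2, zsq_mem x.prop.2.1⟩,
   ⟨x.val.2.2.1 ^ 2, zsq_mem x.prop.2.2.1⟩,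
   ⟨x.val.2.2.2 ^ 2, zsq_mem x.prop.2.2.2⟩)

lemma Sblk_gen₁ (w : EuclideanSpace ℝ (Fin n) × ℂ × ℂ × ℂ) (s e : ℕ) :
    Sblk s e (ext n (gen5₁ q l k p n w).1) = Sblk s e (ext n w.1) :=
  Sblk_flip _ _ _ (ext_gen₁ w) s e

lemma Sblk_gen₂ (w : EuclideanSpace ℝ (Fin n) × ℂ × ℂ × ℂ) (s e : ℕ) :
    Sblk s e (ext n (gen5₂ q l k p n w).1) = Sblk s e (ext n w.1) :=
  Sblk_flip _ _ _ (ext_gen₂ w) s e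

lemma Sblk_gen₃ (w : EuclideanSpace ℝ (Fin n) × ℂ × ℂ × ℂ) (s e : ℕ) :
    Sblk s e (ext n (gen5₃ q l k p n w).1) = Sblk s e (ext n w.1) :=
  Sblk_flip _ _ _ (ext_gen₃ w) s e

lemma Phi_rel (hql : q < l) (hlk : l < k) (hkp : k < p) (hpn : p < n)
    (hklq : k < l + q) (hineq : n + k + l < 2 * p + q) (hqe : Even q) (hle : Even l)
    (hke : Even k) (hpe : Even p) (hne : Even n) :
    ∀ a b : totalSpace5 q l k p n, orbitRel5 q l k p n a b →
      Phi q l k p n hql hlk hkp hpn hklq hineq hqe hle hke hpe hne a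
        = Phi q l k p n hql hlk hkp hpn hklq hineq hqe hle hke hpe hne b := by
  rintro a b ⟨s₁, s₂, s₃, hb⟩
  have hvm : vm q l k p n b.val = vm q l k p n a.val := by
    rw [hb]
    cases s₁ <;> cases s₂ <;> cases s₃ <;>
      simp only [cond_true, cond_false, id_eq, vm_gen₁ hql.le hlk.le hkp.le hle hpe,
        vm_gen₂ hql.le hlk.le hkp.le hqe hle hke, vm_gen₃ hql.le hlk.le hkp.le hqe hke hpe]
  have hS : ∀ s e : ℕ, Sblk s e (ext n b.val.1) = Sblk s e (ext n a.val.1) := by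
    intro s e
    rw [hb]
    cases s₁ <;> cases s₂ <;> cases s₃ <;>
      simp only [cond_true, cond_false, id_eq, Sblk_gen₁, Sblk_gen₂, Sblk_gen₃]
  have hz1 : b.val.2.1 ^ 2 = a.val.2.1 ^ 2 := by
    rw [hb]
    cases s₁ <;> cases s₂ <;> cases s₃ <;>
      simp [gen5₁, gen5₂, gen5₃, neg_sq]
  have hz2 : b.val.2.2.1 ^ 2 = a.val.2.2.1 ^ 2 := by
    rw [hb]
    cases s₁ <;> cases s₂ <;> cases s₃ <;>
      simp [gen5₁, gen5₂, gen5₃, neg_sq]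
  have hz3 : b.val.2.2.2 ^ 2 = a.val.2.2.2 ^ 2 := by
    rw [hb]
    cases s₁ <;> cases s₂ <;> cases s₃ <;>
      simp [gen5₁, gen5₂, gen5₃, neg_sq]
  have hW : Wc q l k p n a.val = Wc q l k p n b.val := by
    refine PiLp.ext fun j => ?_
    show _ * vm q l k p n a.val _ = _ * vm q l k p n b.val _
    rw [hvm]
  have hA : Ac q l k p n a.val = Ac q l k p n b.val := by
    refine PiLp.ext fun j => ?_
    show (Real.sqrt (Sblk 0 q (ext n a.val.1)))⁻¹ * vm q l k p n a.val _
      = (Real.sqrt (Sblk 0 q (ext n b.val.1)))⁻¹ * vm q l k p n b.val _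
    rw [hvm, hS]
  have hD : Dc q l k p n a.val = Dc q l k p n b.val := by
    refine PiLp.ext fun j => ?_
    show (Real.sqrt (Sblk k p (ext n a.val.1)))⁻¹ * vm q l k p n a.val _
      = (Real.sqrt (Sblk k p (ext n b.val.1)))⁻¹ * vm q l k p n b.val _
    rw [hvm, hS]
  refine Prod.ext (Subtype.ext hW) (Prod.ext (Subtype.ext hD) (Prod.ext (Subtype.ext hA)
    (Prod.ext (Subtype.ext hz1.symm) (Prod.ext (Subtype.ext hz2.symm)
      (Subtype.ext hz3.symm)))))

lemma Phi_inj (hql : q < l) (hlk : l < k) (hkp : k < p) (hpn : p < n)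
    (hklq : k < l + q) (hineq : n + k + l < 2 * p + q) (hqe : Even q) (hle : Even l)
    (hke : Even k) (hpe : Even p) (hne : Even n) (a b : totalSpace5 q l k p n)
    (h : Phi q l k p n hql hlk hkp hpn hklq hineq hqe hle hke hpe hne a
        = Phi q l k p n hql hlk hkp hpn hklq hineq hqe hle hke hpe hne b) :
    orbitRel5 q l k p n a b := by
  have c4 : (p : ℝ) < n := by exact_mod_cast hpn
  have c1 : (q : ℝ) < l := by exact_mod_cast hql
  have c2 : (l : ℝ) < k := by exact_mod_cast hlk
  have hcpos : (0 : ℝ) < (n : ℝ) - p + k - q := by linarith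
  have hrne : Real.sqrt ((n : ℝ) - p + k - q) ≠ 0 :=
    ne_of_gt (Real.sqrt_pos.mpr hcpos)
  have hWv : Wc q l k p n a.val = Wc q l k p n b.val :=
    congrArg (fun t => (t.1.val : EuclideanSpace ℝ (Fin (n - p + k - q)))) h
  have hDv : Dc q l k p n a.val = Dc q l k p n b.val :=
    congrArg (fun t => (t.2.1.val : EuclideanSpace ℝ (Fin (p - k)))) h
  have hAv : Ac q l k p n a.val = Ac q l k p n b.val :=
    congrArg (fun t => (t.2.2.1.val : EuclideanSpace ℝ (Fin q))) h
  have hz1 : a.val.2.1 ^ 2 = b.val.2.1 ^ 2 := congrArg (fun t => (t.2.2.2.1.val : ℂ)) h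
  have hz2 : a.val.2.2.1 ^ 2 = b.val.2.2.1 ^ 2 :=
    congrArg (fun t => (t.2.2.2.2.1.val : ℂ)) h
  have hz3 : a.val.2.2.2 ^ 2 = b.val.2.2.2 ^ 2 :=
    congrArg (fun t => (t.2.2.2.2.2.val : ℂ)) h
  obtain ⟨fAa, fDa, fBCEa, hAa, hDa⟩ := facts hql hlk hkp hpn hklq hineq a.val.1 a.prop.1
  obtain ⟨fAb, fDb, fBCEb, hAb, hDb⟩ := facts hql hlk hkp hpn hklq hineq b.val.1 b.prop.1
  -- vm equal on middle range [q,k) and on [p,n)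
  have hvmW : ∀ m, q ≤ m → m < k ∨ (p ≤ m ∧ m < n) → vm q l k p n a.val m = vm q l k p n b.val m := by
    intro m h1 h2
    rcases h2 with h2 | ⟨h2, h3⟩
    · have hj : m - q < n - p + k - q := by omega
      have hc := congrArg (fun v : EuclideanSpace ℝ (Fin (n - p + k - q)) => v ⟨m - q, hj⟩) hWv
      simp only [Wc, PiLp.toLp_apply] at hc
      rw [if_pos (show ((⟨m - q, hj⟩ : Fin (n - p + k - q)) : ℕ) < k - q by
          simpa using by omega)] at hc
      have hqm : q + ((⟨m - q, hj⟩ : Fin (n - p + k - q)) : ℕ) = m := by simp; omega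
      rw [hqm] at hc
      exact mul_left_cancel₀ (inv_ne_zero hrne) hc
    · have hj : (k - q) + (m - p) < n - p + k - q := by omega
      have hc := congrArg (fun v : EuclideanSpace ℝ (Fin (n - p + k - q)) =>
        v ⟨(k - q) + (m - p), hj⟩) hWv
      simp only [Wc, PiLp.toLp_apply] at hc
      rw [if_neg (show ¬ ((⟨(k - q) + (m - p), hj⟩ : Fin (n - p + k - q)) : ℕ) < k - q by
          simpa using by omega)] at hc
      have hqm : p + ((⟨(k - q) + (m - p), hj⟩ : Fin (n - p + k - q)) : ℕ) - (k - q) = m := by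
        simp; omega
      rw [hqm] at hc
      exact mul_left_cancel₀ (inv_ne_zero hrne) hc
  have hsC : Sblk l k (ext n a.val.1) = Sblk l k (ext n b.val.1) := by
    rw [← Sblk_vm hqe hle hke hpe hle hke a.val a.prop.2.1 a.prop.2.2.1 a.prop.2.2.2,
      ← Sblk_vm hqe hle hke hpe hle hke b.val b.prop.2.1 b.prop.2.2.1 b.prop.2.2.2]
    refine Finset.sum_congr rfl fun m hm => ?_
    rw [mem_Ico] at hm
    rw [hvmW m (by omega) (Or.inl (by omega))]
  have hsA : Sblk 0 q (ext n a.val.1) = Sblk 0 q (ext n b.val.1) := by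
    rw [fAa, fAb, hsC]
  have hsD : Sblk k p (ext n a.val.1) = Sblk k p (ext n b.val.1) := by
    rw [fDa, fDb, hsC]
  have hvm : vm q l k p n b.val = vm q l k p n a.val := by
    funext m
    rcases lt_or_ge m q with h1 | h1
    · have hc := congrArg (fun v : EuclideanSpace ℝ (Fin q) => v ⟨m, h1⟩) hAv
      simp only [Ac, PiLp.toLp_apply] at hc
      rw [hsA] at hc
      exact (mul_left_cancel₀ (inv_ne_zero (ne_of_gt (Real.sqrt_pos.mpr
        (by rw [← hsA]; exact hAa)))) hc).symm
    · rcases lt_or_ge m k with h2 | h2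
      · exact (hvmW m h1 (Or.inl h2)).symm
      · rcases lt_or_ge m p with h3 | h3
        · have hj : m - k < p - k := by omega
          have hc := congrArg (fun v : EuclideanSpace ℝ (Fin (p - k)) => v ⟨m - k, hj⟩) hDv
          simp only [Dc, PiLp.toLp_apply] at hc
          rw [hsD] at hc
          have hkm : k + ((⟨m - k, hj⟩ : Fin (p - k)) : ℕ) = m := by simp; omega
          rw [hkm] at hc
          exact (mul_left_cancel₀ (inv_ne_zero (ne_of_gt (Real.sqrt_pos.mpr
            (by rw [← hsD]; exact hDa)))) hc).symm
        · rcases lt_or_ge m n with h4 | h4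
          · exact (hvmW m (by omega) (Or.inr ⟨h3, h4⟩)).symm
          · rw [vm_zero_high hne a.val h4, vm_zero_high hne b.val h4]
  have hn1 : Complex.normSq a.val.2.1 = 1 := normSq_of_mem a.prop.2.1
  have hn2 : Complex.normSq a.val.2.2.1 = 1 := normSq_of_mem a.prop.2.2.1
  have hn3 : Complex.normSq a.val.2.2.2 = 1 := normSq_of_mem a.prop.2.2.2
  rcases sq_cases hz1.symm with h1 | h1 <;> rcases sq_cases hz2.symm with h2 | h2 <;>
    rcases sq_cases hz3.symm with h3 | h3
  · exact ⟨false, false, false, build hql.le hlk.le hkp.le hqe hle hke hpe a.val b.val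
      1 1 1 false false false rfl rfl rfl (by rw [h1]; push_cast; ring)
      (by rw [h2]; push_cast; ring) (by rw [h3]; push_cast; ring) hn1 hn2 hn3 hvm⟩
  · exact ⟨false, false, true, build hql.le hlk.le hkp.le hqe hle hke hpe a.val b.val
      1 1 (-1) false false true rfl rfl rfl (by rw [h1]; push_cast; ring)
      (by rw [h2]; push_cast; ring) (by rw [h3]; push_cast; ring) hn1 hn2 hn3 hvm⟩
  · exact ⟨false, true, false, build hql.le hlk.le hkp.le hqe hle hke hpe a.val b.val
      1 (-1) 1 false true false rfl rfl rfl (by rw [h1]; push_cast; ring)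
      (by rw [h2]; push_cast; ring) (by rw [h3]; push_cast; ring) hn1 hn2 hn3 hvm⟩
  · exact ⟨false, true, true, build hql.le hlk.le hkp.le hqe hle hke hpe a.val b.val
      1 (-1) (-1) false true true rfl rfl rfl (by rw [h1]; push_cast; ring)
      (by rw [h2]; push_cast; ring) (by rw [h3]; push_cast; ring) hn1 hn2 hn3 hvm⟩
  · exact ⟨true, false, false, build hql.le hlk.le hkp.le hqe hle hke hpe a.val b.val
      (-1) 1 1 true false false rfl rfl rfl (by rw [h1]; push_cast; ring)
      (by rw [h2]; push_cast; ring) (by rw [h3]; push_cast; ring) hn1 hn2 hn3 hvm⟩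
  · exact ⟨true, false, true, build hql.le hlk.le hkp.le hqe hle hke hpe a.val b.val
      (-1) 1 (-1) true false true rfl rfl rfl (by rw [h1]; push_cast; ring)
      (by rw [h2]; push_cast; ring) (by rw [h3]; push_cast; ring) hn1 hn2 hn3 hvm⟩
  · exact ⟨true, true, false, build hql.le hlk.le hkp.le hqe hle hke hpe a.val b.val
      (-1) (-1) 1 true true false rfl rfl rfl (by rw [h1]; push_cast; ring)
      (by rw [h2]; push_cast; ring) (by rw [h3]; push_cast; ring) hn1 hn2 hn3 hvm⟩
  · exact ⟨true, true, true, build hql.le hlk.le hkp.le hqe hle hke hpe a.val b.val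
      (-1) (-1) (-1) true true true rfl rfl rfl (by rw [h1]; push_cast; ring)
      (by rw [h2]; push_cast; ring) (by rw [h3]; push_cast; ring) hn1 hn2 hn3 hvm⟩

lemma mem_sphere_of_normSq {z : ℂ} (h : Complex.normSq z = 1) : z ∈ Metric.sphere (0 : ℂ) 1 := by
  rw [mem_sphere_zero_iff_norm, Complex.norm_def, h, Real.sqrt_one]

lemma sqrt_unit (w : ℂ) (hw : Complex.normSq w = 1) :
    ∃ z : ℂ, Complex.normSq z = 1 ∧ z ^ 2 = w := by
  by_cases hw1 : w = -1
  · refine ⟨Complex.I, by simp [Complex.normSq_apply], ?_⟩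
    rw [Complex.I_sq, hw1]
  · have hne : (1 + w) ≠ 0 := by
      intro h0
      exact hw1 (by linear_combination h0)
    have hcne : ‖1 + w‖ ≠ 0 := norm_ne_zero_iff.mpr hne
    refine ⟨(1 + w) / ((‖1 + w‖ : ℝ) : ℂ), ?_, ?_⟩
    · rw [Complex.normSq_div, Complex.normSq_ofReal, ← Complex.sq_norm (1 + w), sq]
      field_simp
    · have hwc : w * starRingEnd ℂ w = 1 := by
        rw [Complex.mul_conj, hw, Complex.ofReal_one]
      have hcc : (((‖1 + w‖ : ℝ) : ℂ)) ^ 2 = (1 + w) * starRingEnd ℂ (1 + w) := by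
        rw [Complex.mul_conj, ← Complex.sq_norm (1 + w)]
        push_cast
        ring
      rw [div_pow, hcc, div_eq_iff (by
        intro h0
        rcases mul_eq_zero.mp h0 with h1 | h1
        · exact hne h1
        · exact hne (by simpa using congrArg (starRingEnd ℂ) h1))]
      simp only [map_add, map_one]
      linear_combination (-(1 + w)) * hwc

set_option maxHeartbeats 1000000 in
lemma Phi_surj (hql : q < l) (hlk : l < k) (hkp : k < p) (hpn : p < n)
    (hklq : k < l + q) (hineq : n + k + l < 2 * p + q) (hqe : Even q) (hle : Even l)
    (hke : Even k) (hpe : Even p) (hne : Even n)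
    (t : Metric.sphere (0 : EuclideanSpace ℝ (Fin (n - p + k - q))) 1 ×
      Metric.sphere (0 : EuclideanSpace ℝ (Fin (p - k))) 1 ×
      Metric.sphere (0 : EuclideanSpace ℝ (Fin q)) 1 ×
      Metric.sphere (0 : ℂ) 1 × Metric.sphere (0 : ℂ) 1 × Metric.sphere (0 : ℂ) 1) :
    ∃ x : totalSpace5 q l k p n,
      Phi q l k p n hql hlk hkp hpn hklq hineq hqe hle hke hpe hne x = t := by
  obtain ⟨⟨W, hW⟩, ⟨D, hD⟩, ⟨A, hA⟩, ⟨w₁, hw₁⟩, ⟨w₂, hw₂⟩, ⟨w₃, hw₃⟩⟩ := t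
  obtain ⟨z₁, hz₁n, hz₁s⟩ := sqrt_unit w₁ (normSq_of_mem hw₁)
  obtain ⟨z₂, hz₂n, hz₂s⟩ := sqrt_unit w₂ (normSq_of_mem hw₂)
  obtain ⟨z₃, hz₃n, hz₃s⟩ := sqrt_unit w₃ (normSq_of_mem hw₃)
  have c1 : (q : ℝ) < l := by exact_mod_cast hql
  have c2 : (l : ℝ) < k := by exact_mod_cast hlk
  have c3 : (k : ℝ) < p := by exact_mod_cast hkp
  have c4 : (p : ℝ) < n := by exact_mod_cast hpn
  have c5 : (k : ℝ) < l + q := by exact_mod_cast hklq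
  have c6 : (n : ℝ) + k + l < 2 * p + q := by exact_mod_cast hineq
  set c : ℝ := (n : ℝ) - p + k - q with hcdef
  have hcpos : 0 < c := by rw [hcdef]; linarith
  set sC : ℝ := c * Sblk (l - q) (k - q) (ext (n - p + k - q) W) with hsCdef
  have hWsum : Sblk 0 (n - p + k - q) (ext (n - p + k - q) W) = 1 := (mem_sphere_iff_Sblk W).mp hW
  have hAsum : Sblk 0 q (ext q A) = 1 := (mem_sphere_iff_Sblk A).mp hA
  have hDsum : Sblk 0 (p - k) (ext (p - k) D) = 1 := (mem_sphere_iff_Sblk D).mp hD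
  have hWsplit : Sblk 0 (n - p + k - q) (ext (n - p + k - q) W) = Sblk 0 (l - q) (ext (n - p + k - q) W)
      + Sblk (l - q) (k - q) (ext (n - p + k - q) W) + Sblk (k - q) (n - p + k - q) (ext (n - p + k - q) W) := by
    rw [Sblk_split (ext (n - p + k - q) W) (Nat.zero_le (l - q))
        (show l - q ≤ n - p + k - q by omega),
      Sblk_split (ext (n - p + k - q) W) (show l - q ≤ k - q by omega)
        (show k - q ≤ n - p + k - q by omega)]
    ring
  have hsCnn : 0 ≤ sC := mul_nonneg hcpos.le (Sblk_nonneg _ _ _)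
  have hsCle : sC ≤ c := by
    have h1 := Sblk_nonneg 0 (l - q) (ext (n - p + k - q) W)
    have h2 := Sblk_nonneg (k - q) (n - p + k - q) (ext (n - p + k - q) W)
    have h3 : Sblk (l - q) (k - q) (ext (n - p + k - q) W) ≤ 1 := by
      rw [← hWsum]
      rw [hWsplit]
      linarith
    nlinarith
  set α : ℝ := Real.sqrt (sC + ((l : ℝ) + q - k)) with hαdef
  set ρ : ℝ := Real.sqrt ((p : ℝ) - l - sC) with hρdef
  set r : ℝ := Real.sqrt c with hrdef
  have hαpos : 0 < α := Real.sqrt_pos.mpr (by linarith)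
  have hρpos : 0 < ρ := Real.sqrt_pos.mpr (by linarith)
  have hrpos : 0 < r := Real.sqrt_pos.mpr hcpos
  have hαsq : α ^ 2 = sC + ((l : ℝ) + q - k) := Real.sq_sqrt (by linarith)
  have hρsq : ρ ^ 2 = (p : ℝ) - l - sC := Real.sq_sqrt (by linarith)
  have hrsq : r ^ 2 = c := Real.sq_sqrt hcpos.le
  set g : ℕ → ℝ := fun m =>
    if m < q then α * ext q A m
    else if m < k then r * ext (n - p + k - q) W (m - q)
    else if m < p then ρ * ext (p - k) D (m - k)
    else if m < n then r * ext (n - p + k - q) W ((k - q) + (m - p))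
    else 0 with hgdef
  set ζi : ℕ → ℂ := fun m =>
    if m < q then z₁ * z₂ * z₃ else if m < l then z₁ else if m < k then z₂
    else if m < p then z₃ else z₁ with hζdef
  have hζn : ∀ m, Complex.normSq (ζi m) = 1 := by
    intro m
    simp only [hζdef]
    split_ifs <;> simp [Complex.normSq_mul, hz₁n, hz₂n, hz₃n]
  have hζp : PairConst ζi := by
    obtain ⟨a2, ha2⟩ := hqe; obtain ⟨b2, hb2⟩ := hle
    obtain ⟨c2', hc2⟩ := hke; obtain ⟨d2, hd2⟩ := hpe
    intro m hm; obtain ⟨t2, ht2⟩ := hm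
    simp only [hζdef]
    simp only [show (m + 1 < q) ↔ (m < q) by constructor <;> omega,
      show (m + 1 < l) ↔ (m < l) by constructor <;> omega,
      show (m + 1 < k) ↔ (m < k) by constructor <;> omega,
      show (m + 1 < p) ↔ (m < p) by constructor <;> omega]
  have hg0 : ∀ m, n ≤ m → g m = 0 := by
    intro m hm
    simp only [hgdef]
    rw [if_neg (by omega), if_neg (by omega), if_neg (by omega), if_neg (by omega)]
  set u : EuclideanSpace ℝ (Fin n) := WithLp.toLp 2 (fun j : Fin n => rotC ζi g (j : ℕ)) with hudef
  set x : EuclideanSpace ℝ (Fin n) × ℂ × ℂ × ℂ := (u, z₁, z₂, z₃) with hxdef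
  have hextu : ext n u = rotC ζi g := by
    funext m
    by_cases h : m < n
    · rw [ext, dif_pos h]
    · rw [ext, dif_neg h]
      exact (rotC_zero_high ζi g hne hg0 (by omega)).symm
  have hvmx : vm q l k p n x = g := by
    show rotC (zet q l k p z₁ z₂ z₃) (ext n u) = g
    rw [hextu, rotC_rotC _ _ _ hζp]
    have hone : (fun m => zet q l k p z₁ z₂ z₃ m * ζi m) = fun _ => (1 : ℂ) := by
      funext m
      simp only [hζdef]
      simp only [zet]
      split_ifs <;> (rw [mul_comm, Complex.mul_conj]) <;>
        simp [Complex.normSq_mul, hz₁n, hz₂n, hz₃n]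
    rw [hone, rotC_one]
  have hSA : Sblk 0 q g = α ^ 2 := by
    have e : Sblk 0 q g = ∑ m ∈ Ico 0 q, (α * ext q A m) ^ 2 :=
      Finset.sum_congr rfl fun m hm => by
        rw [mem_Ico] at hm; simp only [hgdef]; rw [if_pos (by omega)]
    rw [e, sum_sq_mul]
    have : (∑ m ∈ Ico 0 q, ext q A m ^ 2) = 1 := hAsum
    rw [this, mul_one]
  have hSB : Sblk q l g = c * Sblk 0 (l - q) (ext (n - p + k - q) W) := by
    have e : Sblk q l g = ∑ m ∈ Ico q l, (r * ext (n - p + k - q) W (m - q)) ^ 2 :=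
      Finset.sum_congr rfl fun m hm => by
        rw [mem_Ico] at hm; simp only [hgdef]
        rw [if_neg (by omega), if_pos (by omega)]
    rw [e, Finset.sum_Ico_eq_sum_range]
    have e2 : ∀ i ∈ range (l - q), (r * ext (n - p + k - q) W (q + i - q)) ^ 2
        = (r * ext (n - p + k - q) W i) ^ 2 :=
      fun i _ => by rw [show q + i - q = i from by omega]
    rw [Finset.sum_congr rfl e2, sum_sq_mul, hrsq, Sblk_eq_range]
  have hSC : Sblk l k g = sC := by
    have e : Sblk l k g = ∑ m ∈ Ico l k, (r * ext (n - p + k - q) W (m - q)) ^ 2 :=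
      Finset.sum_congr rfl fun m hm => by
        rw [mem_Ico] at hm; simp only [hgdef]
        rw [if_neg (by omega), if_pos (by omega)]
    rw [e, Finset.sum_Ico_eq_sum_range]
    have e2 : ∀ i ∈ range (k - l), (r * ext (n - p + k - q) W (l + i - q)) ^ 2
        = (r * ext (n - p + k - q) W ((l - q) + i)) ^ 2 :=
      fun i _ => by rw [show l + i - q = (l - q) + i from by omega]
    rw [Finset.sum_congr rfl e2, sum_sq_mul, hrsq, hsCdef]
    congr 1
    have := sum_shift (fun m' => ext (n - p + k - q) W m' ^ 2) (l - q) (k - q)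
    rw [show (k - q) - (l - q) = k - l by omega] at this
    rw [this]
    rfl
  have hSD : Sblk k p g = ρ ^ 2 := by
    have e : Sblk k p g = ∑ m ∈ Ico k p, (ρ * ext (p - k) D (m - k)) ^ 2 :=
      Finset.sum_congr rfl fun m hm => by
        rw [mem_Ico] at hm; simp only [hgdef]
        rw [if_neg (by omega), if_neg (by omega), if_pos (by omega)]
    rw [e, Finset.sum_Ico_eq_sum_range]
    have e2 : ∀ i ∈ range (p - k), (ρ * ext (p - k) D (k + i - k)) ^ 2
        = (ρ * ext (p - k) D i) ^ 2 :=
      fun i _ => by rw [show k + i - k = i from by omega]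
    rw [Finset.sum_congr rfl e2, sum_sq_mul]
    have : (∑ m ∈ range (p - k), ext (p - k) D m ^ 2) = 1 := by
      rw [← Sblk_eq_range]; exact hDsum
    rw [this, mul_one]
  have hSE : Sblk p n g = c * Sblk (k - q) (n - p + k - q) (ext (n - p + k - q) W) := by
    have e : Sblk p n g = ∑ m ∈ Ico p n, (r * ext (n - p + k - q) W ((k - q) + (m - p))) ^ 2 :=
      Finset.sum_congr rfl fun m hm => by
        rw [mem_Ico] at hm; simp only [hgdef]
        rw [if_neg (by omega), if_neg (by omega), if_neg (by omega), if_pos (by omega)]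
    rw [e, Finset.sum_Ico_eq_sum_range]
    have e2 : ∀ i ∈ range (n - p), (r * ext (n - p + k - q) W ((k - q) + (p + i - p))) ^ 2
        = (r * ext (n - p + k - q) W ((k - q) + i)) ^ 2 :=
      fun i _ => by rw [show p + i - p = i from by omega]
    rw [Finset.sum_congr rfl e2, sum_sq_mul, hrsq]
    congr 1
    have := sum_shift (fun m' => ext (n - p + k - q) W m' ^ 2) (k - q) (n - p + k - q)
    rw [show (n - p + k - q) - (k - q) = n - p by omega] at this
    rw [this]
    rfl
  have hSrot : ∀ s e : ℕ, Even s → Even e → Sblk s e (ext n u) = Sblk s e g := by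
    intro s e hs he
    rw [hextu]
    exact Sblk_rotC ζi g hζn hζp hs he
  have hmem : x.1 ∈ quadR3 q l k p n := by
    rw [quad_mem hql.le hlk.le hkp.le hpn.le]
    refine ⟨?_, ?_, ?_⟩
    · rw [Sblk_split (ext n x.1) (Nat.zero_le q) hql.le,
        hSrot 0 q Even.zero hqe, hSrot q l hqe hle, hSrot p n hpe hne,
        hSA, hSB, hSE, hαsq]
      have := hWsum
      rw [hWsplit] at this
      nlinarith
    · rw [hSrot 0 q Even.zero hqe, hSrot l k hle hke, hSA, hSC, hαsq]
      ring
    · rw [hSrot 0 q Even.zero hqe, hSrot k p hke hpe, hSA, hSD, hαsq, hρsq]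
      ring
  refine ⟨⟨x, hmem, mem_sphere_of_normSq hz₁n, mem_sphere_of_normSq hz₂n,
    mem_sphere_of_normSq hz₃n⟩, ?_⟩
  have hvSA : Sblk 0 q (ext n x.1) = α ^ 2 := by rw [hSrot 0 q Even.zero hqe, hSA]
  have hvSD : Sblk k p (ext n x.1) = ρ ^ 2 := by rw [hSrot k p hke hpe, hSD]
  refine Prod.ext (Subtype.ext ?_) (Prod.ext (Subtype.ext ?_) (Prod.ext (Subtype.ext ?_)
    (Prod.ext (Subtype.ext ?_) (Prod.ext (Subtype.ext ?_) (Subtype.ext ?_)))))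
  · -- W component
    refine PiLp.ext fun j => ?_
    show (Real.sqrt ((n : ℝ) - p + k - q))⁻¹
        * vm q l k p n x (if (j : ℕ) < k - q then q + (j : ℕ) else p + (j : ℕ) - (k - q)) = W j
    rw [hvmx, ← hcdef, ← hrdef]
    by_cases hj : (j : ℕ) < k - q
    · rw [if_pos hj]
      simp only [hgdef]
      rw [if_neg (by omega), if_pos (by omega)]
      rw [show q + (j : ℕ) - q = (j : ℕ) by omega, ext_of_fun _ (j.isLt)]
      field_simp
    · rw [if_neg hj]
      simp only [hgdef]
      have hjN : (j : ℕ) < (n - p + k - q) := j.isLt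
      rw [if_neg (by omega), if_neg (by omega), if_neg (by omega), if_pos (by omega)]
      rw [show (k - q) + (p + (j : ℕ) - (k - q) - p) = (j : ℕ) by omega,
        ext_of_fun _ (j.isLt)]
      field_simp [ne_of_gt hrpos]
  · -- D component
    refine PiLp.ext fun j => ?_
    show (Real.sqrt (Sblk k p (ext n x.1)))⁻¹ * vm q l k p n x (k + (j : ℕ)) = D j
    rw [hvmx, hvSD, Real.sqrt_sq hρpos.le]
    simp only [hgdef]
    have hjpk : (j : ℕ) < p - k := j.isLt
    rw [if_neg (by omega), if_neg (by omega), if_pos (by omega)]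
    rw [show k + (j : ℕ) - k = (j : ℕ) by omega, ext_of_fun _ (j.isLt)]
    field_simp [ne_of_gt hρpos]
  · -- A component
    refine PiLp.ext fun j => ?_
    show (Real.sqrt (Sblk 0 q (ext n x.1)))⁻¹ * vm q l k p n x (j : ℕ) = A j
    rw [hvmx, hvSA, Real.sqrt_sq hαpos.le]
    simp only [hgdef]
    rw [if_pos j.isLt]
    rw [ext_of_fun _ (j.isLt)]
    field_simp [ne_of_gt hαpos]
  · exact hz₁s
  · exact hz₂s
  · exact hz₃s

lemma cont_ext (m : ℕ) : Continuous fun x : EuclideanSpace ℝ (Fin n) × ℂ × ℂ × ℂ =>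
    ext n x.1 m := by
  unfold ext
  split_ifs with h
  · exact (PiLp.continuous_apply (p := 2) (β := fun _ : Fin n => ℝ) (⟨m, h⟩ : Fin n)).comp continuous_fst
  · exact continuous_const

lemma cont_vm (m : ℕ) : Continuous fun x : EuclideanSpace ℝ (Fin n) × ℂ × ℂ × ℂ =>
    vm q l k p n x m := by
  have hz : Continuous fun x : EuclideanSpace ℝ (Fin n) × ℂ × ℂ × ℂ =>
      zet q l k p x.2.1 x.2.2.1 x.2.2.2 m := by
    unfold zet
    split_ifs <;> exact continuous_star.comp (by fun_prop)
  unfold vm rotC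
  split_ifs with h
  · exact ((Complex.continuous_re.comp hz).mul (cont_ext m)).sub
      ((Complex.continuous_im.comp hz).mul (cont_ext (m + 1)))
  · exact ((Complex.continuous_im.comp hz).mul (cont_ext (m - 1))).add
      ((Complex.continuous_re.comp hz).mul (cont_ext m))

lemma cont_Sblk (s e : ℕ) : Continuous fun x : EuclideanSpace ℝ (Fin n) × ℂ × ℂ × ℂ =>
    Sblk s e (ext n x.1) := by
  unfold Sblk
  exact continuous_finset_sum _ fun m _ => (cont_ext m).pow 2

lemma Phi_cont (hql : q < l) (hlk : l < k) (hkp : k < p) (hpn : p < n)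
    (hklq : k < l + q) (hineq : n + k + l < 2 * p + q) (hqe : Even q) (hle : Even l)
    (hke : Even k) (hpe : Even p) (hne : Even n) :
    Continuous (Phi q l k p n hql hlk hkp hpn hklq hineq hqe hle hke hpe hne) := by
  have hsub : Continuous fun x : totalSpace5 q l k p n => x.val := continuous_subtype_val
  have hvm : ∀ m, Continuous fun x : totalSpace5 q l k p n => vm q l k p n x.val m :=
    fun m => (cont_vm m).comp hsub
  have hSA : Continuous fun x : totalSpace5 q l k p n =>
      (Real.sqrt (Sblk 0 q (ext n x.val.1)))⁻¹ := by
    refine Continuous.inv₀ (Real.continuous_sqrt.comp ((cont_Sblk 0 q).comp hsub)) ?_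
    intro x
    have := (facts hql hlk hkp hpn hklq hineq x.val.1 x.prop.1).2.2.2.1
    exact ne_of_gt (Real.sqrt_pos.mpr this)
  have hSD : Continuous fun x : totalSpace5 q l k p n =>
      (Real.sqrt (Sblk k p (ext n x.val.1)))⁻¹ := by
    refine Continuous.inv₀ (Real.continuous_sqrt.comp ((cont_Sblk k p).comp hsub)) ?_
    intro x
    have := (facts hql hlk hkp hpn hklq hineq x.val.1 x.prop.1).2.2.2.2
    exact ne_of_gt (Real.sqrt_pos.mpr this)
  refine Continuous.prodMk ?_ (Continuous.prodMk ?_ (Continuous.prodMk ?_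
    (Continuous.prodMk ?_ (Continuous.prodMk ?_ ?_))))
  · refine Continuous.subtype_mk ?_ _
    exact (PiLp.continuous_toLp _ _).comp <| continuous_pi fun j => continuous_const.mul (hvm _)
  · refine Continuous.subtype_mk ?_ _
    exact (PiLp.continuous_toLp _ _).comp <| continuous_pi fun j => hSD.mul (hvm _)
  · refine Continuous.subtype_mk ?_ _
    exact (PiLp.continuous_toLp _ _).comp <| continuous_pi fun j => hSA.mul (hvm _)
  · exact Continuous.subtype_mk ((continuous_fst.comp (continuous_snd.comp hsub)).pow 2) _
  · exact Continuous.subtype_mk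
      ((continuous_fst.comp (continuous_snd.comp (continuous_snd.comp hsub))).pow 2) _
  · exact Continuous.subtype_mk
      ((continuous_snd.comp (continuous_snd.comp (continuous_snd.comp hsub))).pow 2) _

lemma norm_eq_sblk {m : ℕ} (v : EuclideanSpace ℝ (Fin m)) :
    ‖v‖ = Real.sqrt (Sblk 0 m (ext m v)) := by
  rw [EuclideanSpace.norm_eq]
  congr 1
  rw [Sblk, ← range_eq_Ico, ← Fin.sum_univ_eq_sum_range (fun i => ext m v i ^ 2) m]
  exact Finset.sum_congr rfl fun j _ => by rw [ext_fin, Real.norm_eq_abs, sq_abs]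

lemma ts_compact (hql : q < l) (hlk : l < k) (hkp : k < p) (hpn : p < n)
    (hklq : k < l + q) (hineq : n + k + l < 2 * p + q) :
    IsCompact {x : EuclideanSpace ℝ (Fin n) × ℂ × ℂ × ℂ |
      x.1 ∈ quadR3 q l k p n ∧ x.2.1 ∈ Metric.sphere (0 : ℂ) 1 ∧
      x.2.2.1 ∈ Metric.sphere (0 : ℂ) 1 ∧ x.2.2.2 ∈ Metric.sphere (0 : ℂ) 1} := by
  apply Metric.isCompact_of_isClosed_isBounded
  · have hq1 : IsClosed (quadR3 q l k p n) := by
      have hc1 : Continuous fun u : EuclideanSpace ℝ (Fin n) =>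
          ∑ j : Fin n, if (j : ℕ) < l ∨ p ≤ (j : ℕ) then u j ^ 2 else 0 :=
        continuous_finset_sum _ fun j _ => by split_ifs <;> fun_prop
      have hc2 : Continuous fun u : EuclideanSpace ℝ (Fin n) =>
          ∑ j : Fin n, if (j : ℕ) < q then -(u j ^ 2)
            else if l ≤ (j : ℕ) ∧ (j : ℕ) < k then u j ^ 2 else 0 :=
        continuous_finset_sum _ fun j _ => by split_ifs <;> fun_prop
      have hc3 : Continuous fun u : EuclideanSpace ℝ (Fin n) =>
          ∑ j : Fin n, if (j : ℕ) < q ∨ (k ≤ (j : ℕ) ∧ (j : ℕ) < p) then u j ^ 2 else 0 :=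
        continuous_finset_sum _ fun j _ => by split_ifs <;> fun_prop
      exact (isClosed_eq hc1 continuous_const).inter
        ((isClosed_eq hc2 continuous_const).inter (isClosed_eq hc3 continuous_const))
    exact (hq1.preimage continuous_fst).inter
      ((Metric.isClosed_sphere.preimage (continuous_fst.comp continuous_snd)).inter
        ((Metric.isClosed_sphere.preimage
          (continuous_fst.comp (continuous_snd.comp continuous_snd))).inter
         (Metric.isClosed_sphere.preimage
          (continuous_snd.comp (continuous_snd.comp continuous_snd)))))
  · refine (Metric.isBounded_closedBall
      (x := (0 : EuclideanSpace ℝ (Fin n) × ℂ × ℂ × ℂ))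
      (r := max (Real.sqrt (3 * (n : ℝ) + 3)) 1)).subset ?_
    rintro x ⟨hx1, hx2, hx3, hx4⟩
    rw [Metric.mem_closedBall, dist_zero_right]
    have c1 : (q : ℝ) < l := by exact_mod_cast hql
    have c2 : (l : ℝ) < k := by exact_mod_cast hlk
    have c3 : (k : ℝ) < p := by exact_mod_cast hkp
    have c4 : (p : ℝ) < n := by exact_mod_cast hpn
    have c5 : (k : ℝ) < l + q := by exact_mod_cast hklq
    have c6 : (n : ℝ) + k + l < 2 * p + q := by exact_mod_cast hineq
    have cn : (0 : ℝ) ≤ n := Nat.cast_nonneg n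
    obtain ⟨fA, fD, fBCE, hA, hD⟩ := facts hql hlk hkp hpn hklq hineq x.1 hx1
    have hsplit : Sblk 0 n (ext n x.1) = Sblk 0 q (ext n x.1) + Sblk q l (ext n x.1)
        + Sblk l k (ext n x.1) + Sblk k p (ext n x.1) + Sblk p n (ext n x.1) := by
      rw [Sblk_split (ext n x.1) (Nat.zero_le q) (by omega : q ≤ n),
        Sblk_split (ext n x.1) (by omega : q ≤ l) (by omega : l ≤ n),
        Sblk_split (ext n x.1) (by omega : l ≤ k) (by omega : k ≤ n),
        Sblk_split (ext n x.1) (by omega : k ≤ p) (by omega : p ≤ n)]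
      ring
    have hb : Sblk 0 n (ext n x.1) ≤ 3 * (n : ℝ) + 3 := by
      have h1 := Sblk_nonneg q l (ext n x.1)
      have h2 := Sblk_nonneg l k (ext n x.1)
      have h3 := Sblk_nonneg p n (ext n x.1)
      rw [hsplit]
      nlinarith
    have hn1 : ‖x.1‖ ≤ Real.sqrt (3 * (n : ℝ) + 3) := by
      rw [norm_eq_sblk]
      exact Real.sqrt_le_sqrt hb
    rw [mem_sphere_zero_iff_norm] at hx2 hx3 hx4
    have : ‖x‖ = max ‖x.1‖ (max ‖x.2.1‖ (max ‖x.2.2.1‖ ‖x.2.2.2‖)) := by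
      rw [Prod.norm_def, Prod.norm_def, Prod.norm_def]
    rw [this, hx2, hx3, hx4]
    apply max_le
    · exact le_max_of_le_left hn1
    · apply max_le (le_max_right _ _)
      exact max_le (le_max_right _ _) (le_max_right _ _)

end MX

/-- For even positive `q, l, k, p, n`, the orbit space `(R₃ × S¹ × S¹ × S¹)/(ℤ/2)³` is
homeomorphic to `S^{n-p+k-q-1} × S^{p-k-1} × S^{q-1} × S¹ × S¹ × S¹`. -/
theorem stmt5 (q l k p n : ℕ) (hq : 0 < q) (hql : q < l) (hlk : l < k) (hkp : k < p)
    (hpn : p < n) (hklq : k < l + q) (hineq : n + k + l < 2 * p + q)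
    (hqe : Even q) (hle : Even l) (hke : Even k) (hpe : Even p) (hne : Even n) :
    Nonempty (Quot (orbitRel5 q l k p n) ≃ₜ
      sphere (0 : EuclideanSpace ℝ (Fin (n - p + k - q))) 1 ×
      sphere (0 : EuclideanSpace ℝ (Fin (p - k))) 1 ×
      sphere (0 : EuclideanSpace ℝ (Fin q)) 1 ×
      sphere (0 : ℂ) 1 × sphere (0 : ℂ) 1 × sphere (0 : ℂ) 1) := by
  haveI hcs : CompactSpace (totalSpace5 q l k p n) :=
    isCompact_iff_compactSpace.mp (MX.ts_compact hql hlk hkp hpn hklq hineq)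
  haveI : CompactSpace (Quot (orbitRel5 q l k p n)) := by
    constructor
    rw [← (Quot.mk_surjective (r := orbitRel5 q l k p n)).range_eq, ← Set.image_univ]
    exact IsCompact.image isCompact_univ continuous_quot_mk
  set Φq := Quot.lift (MX.Phi q l k p n hql hlk hkp hpn hklq hineq hqe hle hke hpe hne)
    (MX.Phi_rel hql hlk hkp hpn hklq hineq hqe hle hke hpe hne) with hΦq
  have hbij : Function.Bijective Φq := by
    constructor
    · intro u v h
      obtain ⟨a, rfl⟩ := Quot.exists_rep u
      obtain ⟨b, rfl⟩ := Quot.exists_rep v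
      exact Quot.sound (MX.Phi_inj hql hlk hkp hpn hklq hineq hqe hle hke hpe hne a b h)
    · intro t
      obtain ⟨x, hx⟩ := MX.Phi_surj hql hlk hkp hpn hklq hineq hqe hle hke hpe hne t
      exact ⟨Quot.mk _ x, hx⟩
  have hcont : Continuous Φq :=
    continuous_quot_lift _ (MX.Phi_cont hql hlk hkp hpn hklq hineq hqe hle hke hpe hne)
  set_option synthInstance.maxHeartbeats 1000000 in
  exact ⟨Continuous.homeoOfEquivCompactToT2 (f := Equiv.ofBijective Φq hbij) hcont⟩
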